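/- If 𝒜ℐ₂ is strongly non-conflating (interpretations being compatible) and r is a strict refinement mapping from 𝒜ℐ₁ to 𝒜ℐ₂ (conditions S1–S4 hold), then 𝒜ℐ₁ ⊑_r 𝒜ℐ₂ (r satisfies conditions T1–T3). -/

import Mathlib

structure Machine (S A D O : Type) where
  s0 : S
  step : S → A → S
  dom : A → D
  obs : D → S → O

namespace Machine

def run {S A D O : Type} (M : Machine S A D O) (α : List A) : S :=
  α.foldl M.step M.s0

end Machine
/-- An extended architecture: `edge u v = none` means no edge, `edge u v = some none`
means an edge labelled `⊤`, and `edge u v = some (some f)` means an edge labelled by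
the filter-function name `f`.  There is at most one label per ordered pair by
construction, and the relation is reflexive with label `⊤`. -/
structure ExtArch (D L : Type) where
  edge : D → D → Option (Option L)
  refl : ∀ u, edge u u = some none

/-- Values of the `tf` function and of filter-function interpretations:
`eps` is the empty value ε, `base v` an arbitrary basic value, and
`pair σ a` the pair `(σ, a)` of a `tf` value and an action. -/
inductive TFVal (A V : Type) where
  | eps : TFVal A V
  | base : V → TFVal A V
  | pair : List (TFVal A V) → A → TFVal A V

/-- `σ ⌢ x`: appends `x` as a single new last element unless `x = ε`. -/
def snoc' {A V : Type} (σ : List (TFVal A V)) : TFVal A V → List (TFVal A V)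
  | .eps => σ
  | x => σ ++ [x]

/-- `tf`, computed on the reversed action sequence. -/
def tfR {A D L V : Type} (Arch : ExtArch D L) (dm : A → D)
    (I : L → List A → A → TFVal A V) : List A → D → List (TFVal A V)
  | [], _ => []
  | a :: ρ, u =>
    match Arch.edge (dm a) u with
    | none => tfR Arch dm I ρ u
    | some none => tfR Arch dm I ρ u ++ [TFVal.pair (tfR Arch dm I ρ (dm a)) a]
    | some (some f) => snoc' (tfR Arch dm I ρ u) (I f ρ.reverse a)

/-- `tf Arch dm I α u` : maximal information domain `u` is permitted to have after `α`. -/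
def tf {A D L V : Type} (Arch : ExtArch D L) (dm : A → D)
    (I : L → List A → A → TFVal A V) (α : List A) (u : D) : List (TFVal A V) :=
  tfR Arch dm I α.reverse u

/-- `inF Arch dm I α a u` : the information `in_{dom(a),u}(α, a)` transmitted to `u`
when action `a` is performed after `α`. -/
def inF {A D L V : Type} (Arch : ExtArch D L) (dm : A → D)
    (I : L → List A → A → TFVal A V) (α : List A) (a : A) (u : D) : TFVal A V :=
  match Arch.edge (dm a) u with
  | none => TFVal.eps
  | some none => TFVal.pair (tf Arch dm I α (dm a)) a
  | some (some f) => I f α a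
/-- A strongly non-conflating interpreted architecture. -/
def StronglyNonConflating {A D L V : Type} (Arch : ExtArch D L) (dm : A → D)
    (I : L → List A → A → TFVal A V) : Prop :=
  ∀ (u v w : D) (f : L), Arch.edge u w = some (some f) → Arch.edge v w = some none →
    ∀ (a b : A), dm a = u → dm b = v →
      ∀ (α β : List A), I f α a ≠ TFVal.pair (tf Arch dm I β v) b

/-- A compatible interpretation: `𝕀(f)` is `tf_u`-compatible for every edge
`u ↝_f v` with `f ∈ L`. -/
def Compatible {A D L V : Type} (Arch : ExtArch D L) (dm : A → D)
    (I : L → List A → A → TFVal A V) : Prop :=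
  ∀ (u v : D) (f : L), Arch.edge u v = some (some f) →
    ∀ (α β : List A), tf Arch dm I α u = tf Arch dm I β u →
      ∀ (a : A), dm a = u → I f α a = I f β a
/-- `r` is a refinement mapping from `(A₁, dm₁, I₁)` to `(A₂, dm₂, I₂)`,
i.e. conditions T1–T3 hold. -/
def TRef {A D₁ D₂ L₁ L₂ V₁ V₂ : Type} (A₁ : ExtArch D₁ L₁) (dm₁ : A → D₁)
    (I₁ : L₁ → List A → A → TFVal A V₁) (A₂ : ExtArch D₂ L₂) (dm₂ : A → D₂)
    (I₂ : L₂ → List A → A → TFVal A V₂) (r : D₁ → D₂) : Prop :=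
  -- T1
  (Function.Surjective r ∧ dm₂ = r ∘ dm₁) ∧
  -- T2
  (∀ (u v : D₁) (α : List A) (a : A), dm₁ a = u →
    inF A₂ dm₂ I₂ α a (r v) = TFVal.eps → inF A₁ dm₁ I₁ α a v = TFVal.eps) ∧
  -- T3
  (∀ (v : D₁) (α β : List A) (a b : A),
    inF A₂ dm₂ I₂ α a (r v) = inF A₂ dm₂ I₂ β b (r v) →
    inF A₂ dm₂ I₂ α a (r v) ≠ TFVal.eps →
    (a = b ∧ A₂.edge (dm₂ a) (r v) = some none) ∨
      inF A₁ dm₁ I₁ α a v = inF A₁ dm₁ I₁ β b v)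
/-- Condition S1: `r` is onto `D₂` and `dm₂ = r ∘ dm₁`. -/
def CondS1 {A D₁ D₂ : Type} (dm₁ : A → D₁) (dm₂ : A → D₂) (r : D₁ → D₂) : Prop :=
  Function.Surjective r ∧ dm₂ = r ∘ dm₁

/-- Condition S2: `⊤`-edges are mapped to `⊤`-edges. -/
def CondS2 {D₁ D₂ L₁ L₂ : Type} (A₁ : ExtArch D₁ L₁) (A₂ : ExtArch D₂ L₂)
    (r : D₁ → D₂) : Prop :=
  ∀ u v : D₁, A₁.edge u v = some none → A₂.edge (r u) (r v) = some none

/-- Condition S3. -/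
def CondS3 {A D₁ D₂ L₁ L₂ V₁ V₂ : Type} (A₁ : ExtArch D₁ L₁) (dm₁ : A → D₁)
    (I₁ : L₁ → List A → A → TFVal A V₁) (A₂ : ExtArch D₂ L₂)
    (I₂ : L₂ → List A → A → TFVal A V₂) (r : D₁ → D₂) : Prop :=
  ∀ (u v : D₁) (f₁ : L₁), A₁.edge u v = some (some f₁) →
    ∃ f₂ : Option L₂, A₂.edge (r u) (r v) = some f₂ ∧
      (f₂ = none ∨ ∃ g₂ : L₂, f₂ = some g₂ ∧
        ∀ (α : List A) (a : A), dm₁ a = u →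
          I₂ g₂ α a = TFVal.eps → I₁ f₁ α a = TFVal.eps)

/-- Condition S4. -/
def CondS4 {A D₁ D₂ L₁ L₂ V₁ V₂ : Type} (A₁ : ExtArch D₁ L₁) (dm₁ : A → D₁)
    (I₁ : L₁ → List A → A → TFVal A V₁) (A₂ : ExtArch D₂ L₂) (dm₂ : A → D₂)
    (I₂ : L₂ → List A → A → TFVal A V₂) (r : D₁ → D₂) : Prop :=
  ∀ (u : D₁) (a b : A) (f₂ g₂ : L₂),
    A₂.edge (dm₂ a) (r u) = some (some f₂) →
    A₂.edge (dm₂ b) (r u) = some (some g₂) →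
    -- (a)
    ((A₁.edge (dm₁ a) u = none ∧ A₁.edge (dm₁ b) u = none) ∨
    -- (b)
    (∃ f₁ : L₁, A₁.edge (dm₁ a) u = some (some f₁) ∧ A₁.edge (dm₁ b) u = none ∧
      ∀ (α β : List A), I₂ f₂ α a = I₂ g₂ β b → I₂ f₂ α a ≠ TFVal.eps →
        I₁ f₁ α a = TFVal.eps) ∨
    -- (c)
    (A₁.edge (dm₁ a) u = none ∧ ∃ g₁ : L₁, A₁.edge (dm₁ b) u = some (some g₁) ∧
      ∀ (α β : List A), I₂ f₂ α a = I₂ g₂ β b → I₂ f₂ α a ≠ TFVal.eps →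
        I₁ g₁ β b = TFVal.eps) ∨
    -- (d)
    (∃ f₁ g₁ : L₁, A₁.edge (dm₁ a) u = some (some f₁) ∧
      A₁.edge (dm₁ b) u = some (some g₁) ∧
      ∀ (α β : List A), I₂ f₂ α a = I₂ g₂ β b → I₂ f₂ α a ≠ TFVal.eps →
        I₁ f₁ α a = I₁ g₁ β b))

/-- if `𝒜ℐ₂` is strongly non-conflating (interpretations being
compatible) and `r` is a strict refinement mapping (S1–S4), then `r` satisfies
conditions T1–T3. -/
theorem statement16 {A D₁ D₂ L₁ L₂ V₁ V₂ : Type}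
    (A₁ : ExtArch D₁ L₁) (dm₁ : A → D₁) (I₁ : L₁ → List A → A → TFVal A V₁)
    (A₂ : ExtArch D₂ L₂) (dm₂ : A → D₂) (I₂ : L₂ → List A → A → TFVal A V₂)
    (r : D₁ → D₂)
    (hc₁ : Compatible A₁ dm₁ I₁) (hc₂ : Compatible A₂ dm₂ I₂)
    (hs₂ : StronglyNonConflating A₂ dm₂ I₂)
    (h1 : CondS1 dm₁ dm₂ r) (h2 : CondS2 A₁ A₂ r)
    (h3 : CondS3 A₁ dm₁ I₁ A₂ I₂ r)
    (h4 : CondS4 A₁ dm₁ I₁ A₂ dm₂ I₂ r) :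
    TRef A₁ dm₁ I₁ A₂ dm₂ I₂ r := by
  obtain ⟨hsurj, hdm⟩ := h1
  refine ⟨⟨hsurj, hdm⟩, ?_, ?_⟩
  · -- T2
    intro u v α a ha h2eps
    subst ha
    have hdma : dm₂ a = r (dm₁ a) := congrFun hdm a
    rcases he : A₁.edge (dm₁ a) v with _ | _ | f₁
    · simp [inF, he]
    · have h2e := h2 _ _ he
      simp only [inF, hdma, h2e] at h2eps
      cases h2eps
    · obtain ⟨f₂, hf₂, hcond⟩ := h3 _ _ _ he
      rcases hcond with rfl | ⟨g₂, rfl, hg⟩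
      · simp only [inF, hdma, hf₂] at h2eps
        cases h2eps
      · simp only [inF, hdma, hf₂] at h2eps
        simp only [inF, he]
        exact hg α a rfl h2eps
  · -- T3
    intro v α β a b heq hne
    rcases hea : A₂.edge (dm₂ a) (r v) with _ | _ | f₂
    · simp only [inF, hea] at hne; exact absurd rfl hne
    · rcases heb : A₂.edge (dm₂ b) (r v) with _ | _ | g₂
      · simp only [inF, hea, heb] at heq
        cases heq
      · simp only [inF, hea, heb] at heq
        injection heq with h1' h2'
        exact Or.inl ⟨h2', rfl⟩
      · simp only [inF, hea, heb] at heq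
        exact absurd heq.symm (hs₂ (dm₂ b) (dm₂ a) (r v) g₂ heb hea b a rfl rfl β α)
    · rcases heb : A₂.edge (dm₂ b) (r v) with _ | _ | g₂
      · simp only [inF, hea, heb] at heq hne
        exact absurd heq hne
      · simp only [inF, hea, heb] at heq
        exact absurd heq (hs₂ (dm₂ a) (dm₂ b) (r v) f₂ hea heb a b rfl rfl α β)
      · simp only [inF, hea, heb] at heq
        simp only [inF, hea] at hne
        right
        rcases h4 v a b f₂ g₂ hea heb with ⟨ha, hb⟩ | ⟨f₁, ha, hb, hcond⟩ |
            ⟨ha, g₁, hb, hcond⟩ | ⟨f₁, g₁, ha, hb, hcond⟩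
        · simp only [inF, ha, hb]
        · simp only [inF, ha, hb]; exact hcond α β heq hne
        · simp only [inF, ha, hb]; exact (hcond α β heq hne).symm
        · simp only [inF, ha, hb]; exact hcond α β heq hne
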